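/- arXiv:2102.01575 — 4 statements merged into one kernel-verified Lean document; each statement's English description precedes it below -/
import Mathlib

section
/- Let R be a commutative Noetherian local ring and M a nonzero finitely generated R-module. If depth_R(I, M) ≤ depth_R(I, R) for every ideal I of R, then every M-regular sequence x_1, ..., x_n of elements of the maximal ideal is also an R-regular sequence. -/
open RingTheory.Sequence IsLocalRing CategoryTheory CategoryTheory.Limits
open scoped TensorProduct
open Submodule Pointwise

/-- The `I`-depth of the module `M`: the supremum of the lengths of
(weakly) regular sequences on `M` consisting of elements of `I`.
(When `IM ≠ M` this is the common length of maximal `M`-regular sequences in `I`;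
when `IM = M`, in particular when `M = 0`, it is `∞`, matching the usual convention.) -/
noncomputable def rdepth {R : Type*} [CommRing R] (I : Ideal R)
    (M : Type*) [AddCommGroup M] [Module R M] : ℕ∞ :=
  sSup {n : ℕ∞ | ∃ rs : List R, (rs.length : ℕ∞) = n ∧ (∀ r ∈ rs, r ∈ I) ∧
    RingTheory.Sequence.IsWeaklyRegular M rs}

section AssBasics

variable {R : Type*} [CommRing R]

theorem myAssIff [IsNoetherianRing R] {M : Type*} [AddCommGroup M] [Module R M] {p : Ideal R} :
    p ∈ associatedPrimes R M ↔ p.IsPrime ∧ ∃ x : M, p = (R ∙ x).annihilator := by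
  have hc : ∀ x : M, (⊥ : Submodule R M).colon {x} = (R ∙ x).annihilator := fun x => by
    ext r
    rw [Submodule.mem_colon_singleton, Submodule.mem_bot, Submodule.mem_annihilator_span_singleton]
  rw [AssociatedPrimes.mem_iff, isAssociatedPrime_iff]
  simp only [hc]

theorem myAss_subset_union [IsNoetherianRing R] {M : Type*} [AddCommGroup M] [Module R M] (N : Submodule R M) :
    associatedPrimes R M ⊆ associatedPrimes R N ∪ associatedPrimes R (M ⧸ N) := by
  rintro p hpa
  obtain ⟨hp, x, hx⟩ := myAssIff.mp hpa
  by_cases hcase : ∀ r : R, r • x ∈ N → r • x = 0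
  · right
    refine myAssIff.mpr ⟨hp, Submodule.Quotient.mk x, ?_⟩
    ext s
    rw [hx, Submodule.mem_annihilator_span_singleton,
      Submodule.mem_annihilator_span_singleton, ← Submodule.Quotient.mk_smul,
      Submodule.Quotient.mk_eq_zero]
    exact ⟨fun h => h ▸ N.zero_mem, fun h => hcase s h⟩
  · left
    push_neg at hcase
    obtain ⟨r, hrN, hr0⟩ := hcase
    have hrp : r ∉ p := fun hrp => hr0 <| by
      rw [hx, Submodule.mem_annihilator_span_singleton] at hrp; exact hrp
    refine myAssIff.mpr ⟨hp, ⟨r • x, hrN⟩, ?_⟩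
    ext s
    rw [Submodule.mem_annihilator_span_singleton]
    constructor
    · intro hs
      have hsx : s • x = 0 := by rw [hx, Submodule.mem_annihilator_span_singleton] at hs; exact hs
      apply Subtype.ext
      show s • (r • x) = 0
      rw [smul_comm s r x, hsx, smul_zero]
    · intro hs
      have h1 : s • (r • x) = 0 := congrArg Subtype.val hs
      have h2 : (s * r) • x = 0 := by rwa [mul_smul]
      have : s * r ∈ p := by rw [hx, Submodule.mem_annihilator_span_singleton]; exact h2
      exact (hp.mem_or_mem this).resolve_right hrp

theorem myAss_quotient_prime [IsNoetherianRing R] {p : Ideal R} (hp : p.IsPrime) :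
    associatedPrimes R (R ⧸ p) ⊆ {p} := by
  rintro q hqa
  obtain ⟨hq, y, hy⟩ := myAssIff.mp hqa
  obtain ⟨x, rfl⟩ := Ideal.Quotient.mk_surjective (I := p) y
  have hmk : ∀ s : R, (Ideal.Quotient.mk p) s = 0 ↔ s ∈ p := fun s =>
    Ideal.Quotient.eq_zero_iff_mem
  have hsmul : ∀ s : R, s • (Ideal.Quotient.mk p x) = Ideal.Quotient.mk p (s * x) := fun s => by
    rw [Algebra.smul_def, Ideal.Quotient.algebraMap_eq, ← map_mul]
  have hxp : x ∉ p := by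
    intro hxp
    apply hq.ne_top
    rw [hy, Ideal.eq_top_iff_one, Submodule.mem_annihilator_span_singleton, hsmul, one_mul,
      hmk]
    exact hxp
  have : q = p := by
    ext s
    rw [hy, Submodule.mem_annihilator_span_singleton, hsmul, hmk]
    exact ⟨fun h => (hp.mem_or_mem h).resolve_right hxp, fun h => Ideal.mul_mem_right _ _ h⟩
  simp [this]

theorem myAss_finite (M : Type*) [IsNoetherianRing R] [AddCommGroup M] [Module R M]
    [Module.Finite R M] : (associatedPrimes R M).Finite := by
  have hN : IsNoetherian R M := isNoetherian_of_isNoetherianRing_of_finite R M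
  suffices H : ∀ N : Submodule R M, (associatedPrimes R (M ⧸ N)).Finite by
    have h2 := H ⊥
    rwa [LinearEquiv.AssociatedPrimes.eq (Submodule.quotEquivOfEqBot ⊥ rfl)] at h2
  intro N
  induction N using IsNoetherian.induction with
  | hgt N IH =>
    by_cases hsub : Subsingleton (M ⧸ N)
    · rw [associatedPrimes.eq_empty_of_subsingleton]; exact Set.finite_empty
    have : Nontrivial (M ⧸ N) := not_subsingleton_iff_nontrivial.mp hsub
    obtain ⟨p, hp⟩ := associatedPrimes.nonempty R (M ⧸ N)
    obtain ⟨hp', y, hy⟩ := myAssIff.mp hp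
    obtain ⟨x, rfl⟩ := N.mkQ_surjective y
    have hxN : x ∉ N := by
      intro hxN
      apply hp'.ne_top
      rw [hy, Ideal.eq_top_iff_one, Submodule.mem_annihilator_span_singleton]
      rw [show (N.mkQ x : M ⧸ N) = 0 from (Submodule.Quotient.mk_eq_zero N).mpr hxN]
      simp
    have hlt : N < N ⊔ R ∙ x := by
      apply lt_of_le_of_ne le_sup_left
      intro hEq
      exact hxN (hEq ▸ (le_sup_right (α := Submodule R M) (Submodule.mem_span_singleton_self x)))
    have hfin' := IH _ hlt
    set K : Submodule R (M ⧸ N) := R ∙ (N.mkQ x) with hK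
    have hsub1 : associatedPrimes R (M ⧸ N) ⊆
        associatedPrimes R K ∪ associatedPrimes R ((M ⧸ N) ⧸ K) := myAss_subset_union K
    have hKp : associatedPrimes R K ⊆ {p} := by
      have hker : LinearMap.ker (LinearMap.toSpanSingleton R (M ⧸ N) (N.mkQ x))
          = p.restrictScalars R := by
        ext r
        rw [LinearMap.mem_ker, LinearMap.toSpanSingleton_apply]
        rw [Submodule.restrictScalars_mem]
        rw [hy, Submodule.mem_annihilator_span_singleton]
      have e1 : (R ⧸ p) ≃ₗ[R] K :=
        (Submodule.quotEquivOfEq _ _ hker.symm) ≪≫ₗ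
          (LinearMap.toSpanSingleton R (M ⧸ N) (N.mkQ x)).quotKerEquivRange ≪≫ₗ
          (LinearEquiv.ofEq _ _ (LinearMap.span_singleton_eq_range R _ _).symm)
      rw [← LinearEquiv.AssociatedPrimes.eq e1]
      exact myAss_quotient_prime hp'
    have hmapeq : (R ∙ x).map N.mkQ = K := by
      rw [Submodule.map_span, Set.image_singleton]
    have e3 : ((M ⧸ N) ⧸ K) ≃ₗ[R] M ⧸ (N ⊔ R ∙ x) :=
      (Submodule.quotEquivOfEq _ _ hmapeq.symm) ≪≫ₗ
        Submodule.quotientQuotientEquivQuotientSup N (R ∙ x)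
    have hfin2 : (associatedPrimes R ((M ⧸ N) ⧸ K)).Finite := by
      rw [LinearEquiv.AssociatedPrimes.eq e3]; exact hfin'
    exact Set.Finite.subset ((Set.finite_singleton p).union hfin2)
      (hsub1.trans (Set.union_subset_union_left _ hKp))

end AssBasics

section ZD
variable {R : Type*} [CommRing R] [IsNoetherianRing R]

theorem myMem_smul_top_iff {M : Type*} [AddCommGroup M] [Module R M] (x : R) (y : M) :
    y ∈ x • (⊤ : Submodule R M) ↔ ∃ m : M, x • m = y := by
  constructor
  · intro h
    obtain ⟨m, -, rfl⟩ := Set.mem_smul_set.mp h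
    exact ⟨m, rfl⟩
  · rintro ⟨m, rfl⟩
    exact Submodule.smul_mem_pointwise_smul m x ⊤ trivial

theorem myNot_regular_iff_mem_ass (M : Type*) [AddCommGroup M] [Module R M] (z : R) :
    ¬ IsSMulRegular M z ↔ ∃ p ∈ associatedPrimes R M, z ∈ p := by
  constructor
  · intro h
    have h2 : z ∈ {r : R | IsSMulRegular M r}ᶜ := h
    rw [← biUnion_associatedPrimes_eq_compl_regular R M] at h2
    simpa using h2
  · rintro ⟨p, hp, hz⟩ hreg
    have h2 : z ∈ ⋃ p ∈ associatedPrimes R M, (p : Set R) := Set.mem_biUnion hp hz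
    rw [biUnion_associatedPrimes_eq_compl_regular R M] at h2
    exact h2 hreg

theorem myAvoid {I : Ideal R} (T : Set (Ideal R)) (hfin : T.Finite)
    (hprime : ∀ p ∈ T, p.IsPrime) (hnle : ∀ p ∈ T, ¬ I ≤ p) :
    ∃ z ∈ I, ∀ p ∈ T, z ∉ p := by
  by_contra hc
  push_neg at hc
  have hsub : (I : Set R) ⊆ ⋃ p ∈ ((hfin.toFinset : Finset (Ideal R)) : Set (Ideal R)), ((p : Ideal R) : Set R) := by
    intro z hz
    obtain ⟨p, hpT, hzp⟩ := hc z hz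
    refine Set.mem_biUnion (show p ∈ ((hfin.toFinset : Finset (Ideal R)) : Set (Ideal R)) by simpa using hpT) hzp
  rw [Ideal.subset_union_prime (⊥ : Ideal R) (⊥ : Ideal R)
    (fun p hp _ _ => hprime p (hfin.mem_toFinset.mp hp))] at hsub
  obtain ⟨p, hpT, hIp⟩ := hsub
  exact hnle p (hfin.mem_toFinset.mp hpT) hIp

end ZD

section Transfer
variable {R : Type*} [CommRing R] [IsNoetherianRing R]

theorem myExists_ass_le {M : Type*} [AddCommGroup M] [Module R M] [Module.Finite R M]
    {I : Ideal R} (hmax : ∀ w ∈ I, ¬ IsSMulRegular M w) :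
    ∃ p ∈ associatedPrimes R M, I ≤ p := by
  by_contra hc
  push_neg at hc
  obtain ⟨z', hz'I, hz'⟩ := myAvoid (associatedPrimes R M) (myAss_finite M)
    (fun p hp => hp.1) hc
  refine hmax z' hz'I ?_
  by_contra hreg
  rw [myNot_regular_iff_mem_ass] at hreg
  obtain ⟨p, hp, hzp⟩ := hreg
  exact hz' p hp hzp

theorem myMax_transfer {M : Type*} [AddCommGroup M] [Module R M] [Module.Finite R M]
    {I : Ideal R} {x z : R} (hz : z ∈ I)
    (hxreg : IsSMulRegular M x) (hzreg : IsSMulRegular M z)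
    (hmax : ∀ w ∈ I, ¬ IsSMulRegular (QuotSMulTop x M) w) :
    ∀ w ∈ I, ¬ IsSMulRegular (QuotSMulTop z M) w := by
  obtain ⟨p, hpass, hIp⟩ := myExists_ass_le hmax
  obtain ⟨hpprime, ybar, hann⟩ := myAssIff.mp hpass
  obtain ⟨y, rfl⟩ := Submodule.Quotient.mk_surjective _ ybar
  have hymem : ∀ w ∈ I, w • y ∈ x • (⊤ : Submodule R M) := by
    intro w hw
    have h1 : w ∈ (Submodule.span R
        {(Submodule.Quotient.mk y : QuotSMulTop x M)}).annihilator := hann ▸ hIp hw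
    rw [Submodule.mem_annihilator_span_singleton] at h1
    rwa [← Submodule.Quotient.mk_smul, Submodule.Quotient.mk_eq_zero] at h1
  have hynot : y ∉ x • (⊤ : Submodule R M) := by
    intro hy
    apply hpprime.ne_top
    rw [hann, Ideal.eq_top_iff_one, Submodule.mem_annihilator_span_singleton,
      show (Submodule.Quotient.mk y : QuotSMulTop x M) = 0 from
        (Submodule.Quotient.mk_eq_zero _).mpr hy]
    simp
  obtain ⟨y', hy'⟩ := (myMem_smul_top_iff x (z • y)).mp (hymem z hz)
  have hy'notin : y' ∉ z • (⊤ : Submodule R M) := by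
    intro hyz
    obtain ⟨u, rfl⟩ := (myMem_smul_top_iff z y').mp hyz
    refine hynot ((myMem_smul_top_iff x y).mpr ⟨u, ?_⟩)
    apply hzreg
    show z • (x • u) = z • y
    rw [← hy', smul_smul, smul_smul, mul_comm z x]
  have hy'mem : ∀ w ∈ I, w • y' ∈ z • (⊤ : Submodule R M) := by
    intro w hw
    obtain ⟨v, hv⟩ := (myMem_smul_top_iff x (w • y)).mp (hymem w hw)
    refine (myMem_smul_top_iff z (w • y')).mpr ⟨v, ?_⟩
    apply hxreg
    calc x • z • v = z • x • v := by rw [smul_smul, smul_smul, mul_comm]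
      _ = z • w • y := by rw [hv]
      _ = w • z • y := by rw [smul_smul, smul_smul, mul_comm]
      _ = w • x • y' := by rw [hy']
      _ = x • w • y' := by rw [smul_smul, smul_smul, mul_comm]
  intro w hw hreg
  apply hy'notin
  have h0 : w • (Submodule.Quotient.mk y' : QuotSMulTop z M) = 0 := by
    rw [← Submodule.Quotient.mk_smul, Submodule.Quotient.mk_eq_zero]
    exact hy'mem w hw
  rw [isSMulRegular_iff_right_eq_zero_of_smul] at hreg
  have h2 := hreg _ h0
  rwa [Submodule.Quotient.mk_eq_zero] at h2

end Transfer

section Key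

universe u
variable {R : Type*} [CommRing R] [IsNoetherianRing R] [IsLocalRing R]

theorem myKey (n : ℕ) :
    ∀ (M : Type u) [AddCommGroup M] [Module R M] [Module.Finite R M]
      (I : Ideal R), I ≤ maximalIdeal R → ∀ (a b : List R),
      a.length = n → (∀ r ∈ a, r ∈ I) → (∀ r ∈ b, r ∈ I) →
      IsWeaklyRegular M a → IsWeaklyRegular M b →
      (∀ w ∈ I, ¬ IsSMulRegular (M ⧸ (Ideal.ofList a • ⊤ : Submodule R M)) w) →
      b.length ≤ n := by
  induction n with
  | zero =>
    intro M _ _ _ I hI a b hlen haI hbI hareg hbreg hmax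
    rw [List.length_eq_zero_iff] at hlen
    subst hlen
    cases b with
    | nil => simp
    | cons b₀ b' =>
      exfalso
      have hreg : IsSMulRegular M b₀ := ((isWeaklyRegular_cons_iff M b₀ b').mp hbreg).1
      have e : (M ⧸ (Ideal.ofList ([] : List R) • ⊤ : Submodule R M)) ≃ₗ[R] M :=
        Submodule.quotEquivOfEqBot _ (by rw [Ideal.ofList_nil, Submodule.bot_smul])
      exact hmax b₀ (hbI b₀ (List.mem_cons_self (a := b₀) (l := b'))) ((e.isSMulRegular_congr b₀).mpr hreg)
  | succ n IH =>
    intro M _ _ _ I hI a b hlen haI hbI hareg hbreg hmax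
    cases b with
    | nil => simp
    | cons b₀ b' =>
      set bb := b₀ :: b' with hbb
      -- the prefix quotients
      have hAreg : ∀ i, (h : i < a.length) →
          IsSMulRegular (M ⧸ (Ideal.ofList (a.take i) • ⊤ : Submodule R M)) a[i] :=
        fun i h => hareg.regular_mod_prev i h
      have hBreg : ∀ j, (h : j < bb.length) →
          IsSMulRegular (M ⧸ (Ideal.ofList (bb.take j) • ⊤ : Submodule R M)) bb[j] :=
        fun j h => hbreg.regular_mod_prev j h
      -- the set of primes to avoid
      set T : Set (Ideal R) :=
        (⋃ i ∈ Finset.range (n+1),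
          associatedPrimes R (M ⧸ (Ideal.ofList (a.take i) • ⊤ : Submodule R M))) ∪
        (⋃ j ∈ Finset.range bb.length,
          associatedPrimes R (M ⧸ (Ideal.ofList (bb.take j) • ⊤ : Submodule R M))) with hT
      have hTfin : T.Finite := by
        apply Set.Finite.union <;>
        · apply Set.Finite.biUnion (Finset.finite_toSet _)
          intro i _
          exact myAss_finite _
      have hTprime : ∀ p ∈ T, p.IsPrime := by
        rintro p (hp | hp) <;>
        · simp only [Set.mem_iUnion] at hp
          obtain ⟨i, -, hp⟩ := hp
          exact hp.1
      have hTnle : ∀ p ∈ T, ¬ I ≤ p := by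
        rintro p (hp | hp) hIp
        · simp only [Set.mem_iUnion, Finset.mem_range] at hp
          obtain ⟨i, hi, hp⟩ := hp
          have hi' : i < a.length := by omega
          have hmem : a[i] ∈ a := List.getElem_mem hi'
          exact (myNot_regular_iff_mem_ass _ _).mpr ⟨p, hp, hIp (haI _ hmem)⟩
            (hAreg i hi')
        · simp only [Set.mem_iUnion, Finset.mem_range] at hp
          obtain ⟨j, hj, hp⟩ := hp
          have hmem : bb[j] ∈ bb := List.getElem_mem hj
          exact (myNot_regular_iff_mem_ass _ _).mpr ⟨p, hp, hIp (hbI _ hmem)⟩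
            (hBreg j hj)
      obtain ⟨z, hzI, hzT⟩ := myAvoid T hTfin hTprime hTnle
      have hzA : ∀ i, i ≤ n →
          IsSMulRegular (M ⧸ (Ideal.ofList (a.take i) • ⊤ : Submodule R M)) z := by
        intro i hi
        by_contra hc
        rw [myNot_regular_iff_mem_ass] at hc
        obtain ⟨p, hp, hzp⟩ := hc
        exact hzT p (Or.inl (Set.mem_biUnion (Finset.mem_range.mpr (by omega)) hp)) hzp
      have hzB : ∀ j, j < bb.length →
          IsSMulRegular (M ⧸ (Ideal.ofList (bb.take j) • ⊤ : Submodule R M)) z := by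
        intro j hj
        by_contra hc
        rw [myNot_regular_iff_mem_ass] at hc
        obtain ⟨p, hp, hzp⟩ := hc
        exact hzT p (Or.inr (Set.mem_biUnion (Finset.mem_range.mpr hj) hp)) hzp
      -- a.take n ++ [z] is weakly regular
      have hAtake : IsWeaklyRegular M (a.take n) :=
        ((isWeaklyRegular_append_iff M (a.take n) (a.drop n)).mp
          (by rwa [List.take_append_drop])).1
      have haz : IsWeaklyRegular M (a.take n ++ [z]) := by
        rw [isWeaklyRegular_append_iff]
        exact ⟨hAtake, (isWeaklyRegular_singleton_iff _ z).mpr (hzA n le_rfl)⟩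
      -- bb.take b'.length ++ [z] is weakly regular
      have hBtake : IsWeaklyRegular M (bb.take b'.length) :=
        ((isWeaklyRegular_append_iff M (bb.take b'.length) (bb.drop b'.length)).mp
          (by rwa [List.take_append_drop])).1
      have hbz : IsWeaklyRegular M (bb.take b'.length ++ [z]) := by
        rw [isWeaklyRegular_append_iff]
        exact ⟨hBtake, (isWeaklyRegular_singleton_iff _ z).mpr
          (hzB b'.length (by simp [hbb]))⟩
      -- permute z to the front
      have hsubmax : ∀ r ∈ a.take n ++ [z], r ∈ maximalIdeal R := by
        intro r hr
        rcases List.mem_append.mp hr with hr | hr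
        · exact hI (haI r (List.mem_of_mem_take hr))
        · rw [List.mem_singleton] at hr; exact hI (hr ▸ hzI)
      have hsubmaxb : ∀ r ∈ bb.take b'.length ++ [z], r ∈ maximalIdeal R := by
        intro r hr
        rcases List.mem_append.mp hr with hr | hr
        · exact hI (hbI r (List.mem_of_mem_take hr))
        · rw [List.mem_singleton] at hr; exact hI (hr ▸ hzI)
      have hza : IsWeaklyRegular M (z :: a.take n) :=
        IsLocalRing.isWeaklyRegular_of_perm_of_subset_maximalIdeal haz
          List.perm_append_comm hsubmax
      have hzb : IsWeaklyRegular M (z :: bb.take b'.length) :=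
        IsLocalRing.isWeaklyRegular_of_perm_of_subset_maximalIdeal hbz
          List.perm_append_comm hsubmaxb
      have hzregM : IsSMulRegular M z := by
        have := hzA 0 (Nat.zero_le n)
        have e : (M ⧸ (Ideal.ofList (a.take 0) • ⊤ : Submodule R M)) ≃ₗ[R] M :=
          Submodule.quotEquivOfEqBot _ (by rw [List.take_zero, Ideal.ofList_nil,
            Submodule.bot_smul])
        exact (e.isSMulRegular_congr z).mp this
      have hAtake' : IsWeaklyRegular (QuotSMulTop z M) (a.take n) :=
        ((isWeaklyRegular_cons_iff M z (a.take n)).mp hza).2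
      have hBtake' : IsWeaklyRegular (QuotSMulTop z M) (bb.take b'.length) :=
        ((isWeaklyRegular_cons_iff M z (bb.take b'.length)).mp hzb).2
      -- maximality transfer
      have hlen' : n < a.length := by omega
      have haa : a = a.take n ++ [a[n]] := by
        conv_lhs => rw [← List.take_append_drop n a]
        congr 1
        rw [List.drop_eq_getElem_cons hlen', List.drop_eq_nil_of_le (by omega)]
      have hofeq : Ideal.ofList a = Ideal.ofList (a[n] :: a.take n) := by
        conv_lhs => rw [haa]
        simp only [Ideal.ofList_append, Ideal.ofList_cons, Ideal.ofList_singleton,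
          Ideal.ofList_nil, sup_bot_eq]
        rw [sup_comm]
      set N := M ⧸ (Ideal.ofList (a.take n) • ⊤ : Submodule R M) with hN
      have E1 : (M ⧸ (Ideal.ofList a • ⊤ : Submodule R M)) ≃ₗ[R] QuotSMulTop a[n] N :=
        (Submodule.quotEquivOfEq _ _ (by rw [hofeq])) ≪≫ₗ
          Submodule.quotOfListConsSMulTopEquivQuotSMulTopOuter M a[n] (a.take n)
      have hmaxN : ∀ w ∈ I, ¬ IsSMulRegular (QuotSMulTop a[n] N) w :=
        fun w hw hreg => hmax w hw ((E1.isSMulRegular_congr w).mpr hreg)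
      have hmaxZ : ∀ w ∈ I, ¬ IsSMulRegular (QuotSMulTop z N) w :=
        myMax_transfer hzI (hAreg n hlen') (hzA n le_rfl) hmaxN
      have E2 : ((QuotSMulTop z M) ⧸
            (Ideal.ofList (a.take n) • ⊤ : Submodule R (QuotSMulTop z M))) ≃ₗ[R]
          QuotSMulTop z N :=
        (Submodule.quotOfListConsSMulTopEquivQuotSMulTopInner M z (a.take n)).symm ≪≫ₗ
          Submodule.quotOfListConsSMulTopEquivQuotSMulTopOuter M z (a.take n)
      have hmaxM' : ∀ w ∈ I, ¬ IsSMulRegular ((QuotSMulTop z M) ⧸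
          (Ideal.ofList (a.take n) • ⊤ : Submodule R (QuotSMulTop z M))) w :=
        fun w hw hreg => hmaxZ w hw ((E2.isSMulRegular_congr w).mp hreg)
      -- apply the induction hypothesis
      have htakeA : ∀ r ∈ a.take n, r ∈ I := fun r hr => haI r (List.mem_of_mem_take hr)
      have htakeB : ∀ r ∈ bb.take b'.length, r ∈ I :=
        fun r hr => hbI r (List.mem_of_mem_take hr)
      have hlentake : (a.take n).length = n := by
        rw [List.length_take]; omega
      have hres := IH (QuotSMulTop z M) I hI (a.take n) (bb.take b'.length)
        hlentake htakeA htakeB hAtake' hBtake' hmaxM'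
      have hlen2 : (bb.take b'.length).length = b'.length := by
        rw [List.length_take, hbb]
        simp
      rw [hlen2] at hres
      simp only [hbb, List.length_cons]
      omega

end Key

/-- If `depth_R(I, M) ≤ depth_R(I, R)` for every ideal `I`, then every `M`-regular
sequence of elements of the maximal ideal is also an `R`-regular sequence. -/

theorem stmt1 {R : Type*} [CommRing R] [IsNoetherianRing R] [IsLocalRing R]
    (M : Type*) [AddCommGroup M] [Module R M] [Module.Finite R M] [Nontrivial M]
    (h : ∀ I : Ideal R, rdepth I M ≤ rdepth I R) :
    ∀ rs : List R, (∀ x ∈ rs, x ∈ maximalIdeal R) →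
      RingTheory.Sequence.IsRegular M rs → RingTheory.Sequence.IsRegular R rs := by
  have main : ∀ rs : List R, (∀ x ∈ rs, x ∈ maximalIdeal R) → IsWeaklyRegular M rs →
      IsWeaklyRegular R rs := by
    intro rs
    induction rs using List.reverseRecOn with
    | nil => exact fun _ _ => IsWeaklyRegular.nil R R
    | append_singleton rs x IH =>
      intro hmem hreg
      have hmem' : ∀ y ∈ rs, y ∈ maximalIdeal R := fun y hy => hmem y (List.mem_append_left _ hy)
      have hxm : x ∈ maximalIdeal R :=
        hmem x (List.mem_append_right _ (List.mem_singleton_self x))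
      obtain ⟨hrs, hx⟩ := (isWeaklyRegular_append_iff M rs [x]).mp hreg
      have hrsR : IsWeaklyRegular R rs := IH hmem' hrs
      rw [isWeaklyRegular_append_iff, isWeaklyRegular_singleton_iff]
      refine ⟨hrsR, ?_⟩
      by_contra hc
      rw [myNot_regular_iff_mem_ass] at hc
      obtain ⟨p, hpass, hxp⟩ := hc
      have hpprime : p.IsPrime := hpass.1
      have hpmax : p ≤ maximalIdeal R := IsLocalRing.le_maximalIdeal hpprime.ne_top
      have hrsp : ∀ r ∈ rs, r ∈ p := by
        intro r hr
        have h1 : r ∈ Ideal.ofList rs := Ideal.subset_span hr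
        have h2 : ∀ m : (R ⧸ (Ideal.ofList rs • ⊤ : Submodule R R)), r • m = 0 := by
          intro m
          obtain ⟨m, rfl⟩ := Submodule.Quotient.mk_surjective _ m
          rw [← Submodule.Quotient.mk_smul, Submodule.Quotient.mk_eq_zero]
          exact Submodule.smul_mem_smul h1 trivial
        obtain ⟨hp2, ybar, hann⟩ := myAssIff.mp hpass
        rw [hann, Submodule.mem_annihilator_span_singleton]
        exact h2 ybar
      set n := rs.length with hn
      have hmemSup : (((rs ++ [x]).length : ℕ) : ℕ∞) ∈ {k : ℕ∞ | ∃ l : List R,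
          (l.length : ℕ∞) = k ∧ (∀ r ∈ l, r ∈ p) ∧ IsWeaklyRegular M l} := by
        refine ⟨rs ++ [x], rfl, ?_, hreg⟩
        intro r hr
        rcases List.mem_append.mp hr with h' | h'
        · exact hrsp r h'
        · rw [List.mem_singleton] at h'; exact h' ▸ hxp
      have h1 : (((n + 1 : ℕ)) : ℕ∞) ≤ rdepth p M := by
        have := le_sSup hmemSup
        simpa [rdepth, hn] using this
      have h2 : (((n + 1 : ℕ)) : ℕ∞) ≤ rdepth p R := le_trans h1 (h p)
      obtain ⟨ys, hyslen, hysp, hysreg⟩ : ∃ ys : List R, ys.length = n + 1 ∧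
          (∀ r ∈ ys, r ∈ p) ∧ IsWeaklyRegular R ys := by
        by_contra hcon
        push_neg at hcon
        have hb : rdepth p R ≤ (n : ℕ∞) := by
          apply sSup_le
          rintro m ⟨l, rfl, hlp, hlreg⟩
          by_contra hgt
          push_neg at hgt
          have hllen : n + 1 ≤ l.length := by
            rw [Nat.cast_lt] at hgt
            omega
          have hys := l.take (n+1)
          have htlen : (l.take (n+1)).length = n + 1 := by
            rw [List.length_take]; omega
          have htp : ∀ r ∈ l.take (n+1), r ∈ p := fun r hr => hlp r (List.mem_of_mem_take hr)
          have htreg : IsWeaklyRegular R (l.take (n+1)) :=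
            ((isWeaklyRegular_append_iff R (l.take (n+1)) (l.drop (n+1))).mp
              (by rwa [List.take_append_drop])).1
          exact hcon (l.take (n+1)) htlen htp htreg
        have := le_trans h2 hb
        rw [Nat.cast_le] at this
        omega
      have hmaxp : ∀ w ∈ p, ¬ IsSMulRegular (R ⧸ (Ideal.ofList rs • ⊤ : Submodule R R)) w := by
        obtain ⟨hp2, ybar, hann⟩ := myAssIff.mp hpass
        intro w hw hregw
        have hy0 : ybar ≠ 0 := by
          intro h0
          apply hp2.ne_top
          rw [hann, h0, Submodule.span_zero_singleton, Submodule.annihilator_bot]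
        have hwy : w • ybar = 0 := by
          rw [hann, Submodule.mem_annihilator_span_singleton] at hw; exact hw
        rw [isSMulRegular_iff_right_eq_zero_of_smul] at hregw
        exact hy0 (hregw _ hwy)
      have hfinal := myKey n R p hpmax rs ys rfl hrsp hysp hrsR hysreg hmaxp
      omega
  intro rs hmem hreg
  have hweak := main rs hmem hreg.toIsWeaklyRegular
  have : Nontrivial R := inferInstance
  exact (IsLocalRing.isRegular_iff_isWeaklyRegular_of_subset_maximalIdeal hmem).mpr hweak
end

section
/- Let R be a commutative Noetherian local ring and M a nonzero finitely generated R-module. The following are equivalent: (i) every M-regular sequence (of elements of the maximal ideal) is R-regular; (ii) depth_R(I, M) ≤ depth_R(I, R) for every ideal I of R; (iii) depth_R(p, M) ≤ depth_R(p, R) for every prime ideal p of R. -/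
open RingTheory.Sequence IsLocalRing CategoryTheory CategoryTheory.Limits
open scoped TensorProduct

section Aux

open scoped Pointwise

variable {R : Type*} [CommRing R]

section Ass

variable {M : Type*} [AddCommGroup M] [Module R M]

lemma aux_ann_smul_of_prime {x : M} {p : Ideal R} (hp : p = (R ∙ x).annihilator)
    (hp1 : p.IsPrime) {r : R} (hr : r • x ≠ 0) : (R ∙ (r • x)).annihilator = p := by
  ext a
  rw [Submodule.mem_annihilator_span_singleton]
  constructor
  · intro ha
    have h2 : (a * r) • x = 0 := by rwa [mul_smul]
    have h3 : a * r ∈ p := by rw [hp, Submodule.mem_annihilator_span_singleton]; exact h2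
    rcases hp1.mem_or_mem h3 with h | h
    · exact h
    · rw [hp, Submodule.mem_annihilator_span_singleton] at h
      exact absurd h hr
  · intro ha
    rw [hp, Submodule.mem_annihilator_span_singleton] at ha
    rw [smul_comm, ha, smul_zero]

lemma aux_ann_subtype (S : Submodule R M) (v : S) :
    (R ∙ v).annihilator = (R ∙ (v : M)).annihilator := by
  ext a
  rw [Submodule.mem_annihilator_span_singleton, Submodule.mem_annihilator_span_singleton]
  simp [Subtype.ext_iff]

lemma aux_iap_iff [IsNoetherianRing R] {p : Ideal R} :
    IsAssociatedPrime p M ↔ p.IsPrime ∧ ∃ x : M, p = (R ∙ x).annihilator := by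
  rw [isAssociatedPrime_iff]
  have hc : ∀ x : M, (⊥ : Submodule R M).colon {x} = (R ∙ x).annihilator := by
    intro x
    ext a
    rw [Submodule.mem_colon_singleton, Submodule.mem_bot,
      Submodule.mem_annihilator_span_singleton]
  simp_rw [hc]

lemma aux_isAssociatedPrime_ker_or [IsNoetherianRing R] {M' : Type*} [AddCommGroup M'] [Module R M']
    (f : M →ₗ[R] M') {p : Ideal R} (hp : IsAssociatedPrime p M) :
    IsAssociatedPrime p (LinearMap.ker f) ∨ IsAssociatedPrime p M' := by
  obtain ⟨hp1, x, hx⟩ := aux_iap_iff.mp hp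
  by_cases h : ∃ r : R, r • x ∈ LinearMap.ker f ∧ r • x ≠ 0
  · obtain ⟨r, hrk, hr0⟩ := h
    left
    refine aux_iap_iff.mpr ⟨hp1, ⟨r • x, hrk⟩, ?_⟩
    rw [aux_ann_subtype]
    exact (aux_ann_smul_of_prime hx hp1 hr0).symm
  · push_neg at h
    right
    refine aux_iap_iff.mpr ⟨hp1, f x, ?_⟩
    rw [hx]
    ext a
    rw [Submodule.mem_annihilator_span_singleton, Submodule.mem_annihilator_span_singleton,
      ← map_smul]
    constructor
    · intro ha; rw [ha, map_zero]
    · intro ha; exact h a (LinearMap.mem_ker.mpr ha)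

lemma aux_associatedPrimes_finite (R M : Type*) [CommRing R] [IsNoetherianRing R]
    [AddCommGroup M] [Module R M] [IsNoetherian R M] : (associatedPrimes R M).Finite := by
  obtain ⟨N, hN, hmax⟩ := set_has_maximal_iff_noetherian.mpr ‹IsNoetherian R M›
    {N : Submodule R M | (associatedPrimes R N).Finite}
    ⟨⊥, by
      rw [Set.mem_setOf_eq, associatedPrimes.eq_empty_of_subsingleton]
      exact Set.finite_empty⟩
  by_cases hNtop : N = ⊤
  · subst hNtop
    rw [← LinearEquiv.AssociatedPrimes.eq (Submodule.topEquiv (R := R) (M := M))]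
    exact hN
  · exfalso
    have hnt : Nontrivial (M ⧸ N) :=
      Submodule.Quotient.nontrivial_iff.mpr hNtop
    obtain ⟨p, hpass⟩ := associatedPrimes.nonempty R (M ⧸ N)
    obtain ⟨hp1, xb, hxb⟩ := aux_iap_iff.mp hpass
    obtain ⟨x, rfl⟩ := Submodule.Quotient.mk_surjective N xb
    have hxN : x ∉ N := by
      intro hx
      apply hp1.ne_top
      rw [hxb, show (Submodule.Quotient.mk x : M ⧸ N) = 0 from
          (Submodule.Quotient.mk_eq_zero N).mpr hx,
        Submodule.span_zero_singleton, Submodule.annihilator_bot]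
    have hNN' : N ≤ N ⊔ R ∙ x := le_sup_left
    have hlt : N < N ⊔ R ∙ x := by
      refine lt_of_le_of_ne hNN' fun h => ?_
      apply hxN
      rw [h]
      exact Submodule.mem_sup_right (Submodule.mem_span_singleton_self x)
    set f : ↥(N ⊔ R ∙ x) →ₗ[R] M ⧸ N := N.mkQ.comp (N ⊔ R ∙ x).subtype with hf
    have hker : LinearMap.ker f = Submodule.comap (N ⊔ R ∙ x).subtype N := by
      rw [hf, LinearMap.ker_comp, Submodule.ker_mkQ]
    have h0 : Submodule.map N.mkQ N = ⊥ := by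
      rw [eq_bot_iff]
      rintro y hy
      obtain ⟨z, hz, rfl⟩ := Submodule.mem_map.mp hy
      simpa [Submodule.mem_bot, Submodule.mkQ_apply, Submodule.Quotient.mk_eq_zero] using hz
    have hrange : LinearMap.range f = R ∙ (Submodule.Quotient.mk x : M ⧸ N) := by
      rw [hf, LinearMap.range_comp, Submodule.range_subtype, Submodule.map_sup, h0,
        Submodule.map_span, Set.image_singleton, bot_sup_eq, Submodule.mkQ_apply]
    have hsub : associatedPrimes R ↥(N ⊔ R ∙ x) ⊆ associatedPrimes R N ∪ {p} := by
      intro q hq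
      rcases aux_isAssociatedPrime_ker_or f.rangeRestrict hq with h | h
      · left
        rw [LinearMap.ker_rangeRestrict, hker] at h
        exact (Submodule.comapSubtypeEquivOfLe hNN').isAssociatedPrime_iff.mp h
      · right
        rw [hrange] at h
        obtain ⟨hq1, v, hv⟩ := aux_iap_iff.mp h
        rw [aux_ann_subtype] at hv
        obtain ⟨r, hr⟩ := Submodule.mem_span_singleton.mp v.2
        by_cases hv0 : (v : M ⧸ N) = 0
        · exfalso
          apply hq1.ne_top
          rw [hv, hv0, Submodule.span_zero_singleton, Submodule.annihilator_bot]
        · rw [← hr] at hv hv0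
          exact hv.trans (aux_ann_smul_of_prime hxb hp1 hv0)
    exact hmax _ (Set.Finite.subset (hN.union (Set.finite_singleton p)) hsub) hlt

lemma aux_exists_forall_smul_eq_zero [IsNoetherianRing R] [IsNoetherian R M] {I : Ideal R}
    (hI : ∀ x ∈ I, ¬ IsSMulRegular M x) :
    ∃ u : M, u ≠ 0 ∧ ∀ a ∈ I, a • u = 0 := by
  have hfin := aux_associatedPrimes_finite R M
  have hsub : (I : Set R) ⊆ ⋃ p ∈ (hfin.toFinset : Set (Ideal R)), (p : Set R) := by
    intro x hx
    have hx' : x ∈ { r : R | IsSMulRegular M r }ᶜ := hI x hx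
    rw [← biUnion_associatedPrimes_eq_compl_regular R M] at hx'
    simpa [Set.Finite.mem_toFinset] using hx'
  obtain ⟨p, hps, hIp⟩ := (Ideal.subset_union_prime ⊥ ⊥ fun q hq _ _ =>
    ((Set.Finite.mem_toFinset hfin).mp hq).isPrime).mp hsub
  obtain ⟨hp1, u, hu⟩ := aux_iap_iff.mp ((Set.Finite.mem_toFinset hfin).mp hps)
  refine ⟨u, ?_, ?_⟩
  · rintro rfl
    exact hp1.ne_top (by rw [hu, Submodule.span_zero_singleton, Submodule.annihilator_bot])
  · intro a ha
    have ha' : a ∈ p := hIp ha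
    rwa [hu, Submodule.mem_annihilator_span_singleton] at ha'

end Ass

/-- There is a nonzero element killed by `I`. -/
def EAnn (I : Ideal R) (M : Type*) [AddCommGroup M] [Module R M] : Prop :=
  ∃ u : M, u ≠ 0 ∧ ∀ a ∈ I, a • u = 0

lemma eAnn_quot_iff {M : Type*} [AddCommGroup M] [Module R M] (I : Ideal R)
    (K : Submodule R M) :
    EAnn I (M ⧸ K) ↔ ∃ u : M, u ∉ K ∧ ∀ a ∈ I, a • u ∈ K := by
  constructor
  · rintro ⟨ub, h1, h2⟩
    obtain ⟨u, rfl⟩ := Submodule.Quotient.mk_surjective K ub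
    refine ⟨u, fun h => h1 ((Submodule.Quotient.mk_eq_zero K).mpr h), fun a ha => ?_⟩
    have h3 := h2 a ha
    rwa [← Submodule.Quotient.mk_smul, Submodule.Quotient.mk_eq_zero] at h3
  · rintro ⟨u, h1, h2⟩
    exact ⟨Submodule.Quotient.mk u, fun h => h1 ((Submodule.Quotient.mk_eq_zero K).mp h),
      fun a ha => by
        rw [← Submodule.Quotient.mk_smul, Submodule.Quotient.mk_eq_zero]
        exact h2 a ha⟩

lemma eAnn_quot_quot_iff {M : Type*} [AddCommGroup M] [Module R M] (I : Ideal R)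
    (K : Submodule R M) (J : Ideal R) :
    EAnn I ((M ⧸ K) ⧸ (J • ⊤ : Submodule R (M ⧸ K))) ↔
      EAnn I (M ⧸ (K ⊔ J • ⊤ : Submodule R M)) := by
  have hcomap : ∀ v : M, ((Submodule.Quotient.mk v : M ⧸ K) ∈ (J • ⊤ : Submodule R (M ⧸ K)) ↔
      v ∈ (K ⊔ J • ⊤ : Submodule R M)) := by
    intro v
    rw [show (J • ⊤ : Submodule R (M ⧸ K)) = Submodule.map K.mkQ (J • ⊤ : Submodule R M) by
        rw [Submodule.map_smul'', Submodule.map_top, Submodule.range_mkQ],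
      show (K ⊔ J • ⊤ : Submodule R M) =
          Submodule.comap K.mkQ (Submodule.map K.mkQ (J • ⊤ : Submodule R M)) by
        rw [Submodule.comap_map_eq, Submodule.ker_mkQ, sup_comm],
      Submodule.mem_comap, Submodule.mkQ_apply]
  rw [eAnn_quot_iff, eAnn_quot_iff]
  constructor
  · rintro ⟨ub, h1, h2⟩
    obtain ⟨u, rfl⟩ := Submodule.Quotient.mk_surjective K ub
    refine ⟨u, fun h => h1 ((hcomap u).mpr h), fun a ha => (hcomap _).mp ?_⟩
    rw [Submodule.Quotient.mk_smul]
    exact h2 a ha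
  · rintro ⟨u, h1, h2⟩
    refine ⟨Submodule.Quotient.mk u, fun h => h1 ((hcomap u).mp h), fun a ha => ?_⟩
    rw [← Submodule.Quotient.mk_smul]
    exact (hcomap _).mpr (h2 a ha)

lemma aux_eAnn_exchange {N : Type*} [AddCommGroup N] [Module R N] {I : Ideal R} {x y : R}
    (hyI : y ∈ I) (hx : IsSMulRegular N x) (hy : IsSMulRegular N y)
    (h : EAnn I (N ⧸ (Ideal.span {x} • ⊤ : Submodule R N))) :
    EAnn I (N ⧸ (Ideal.span {y} • ⊤ : Submodule R N)) := by
  have hmem : ∀ (c : R) (w : N), w ∈ (Ideal.span {c} • ⊤ : Submodule R N) ↔ ∃ v, w = c • v := by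
    intro c w
    rw [Submodule.ideal_span_singleton_smul]
    constructor
    · intro hw
      rw [← SetLike.mem_coe, Submodule.coe_pointwise_smul] at hw
      obtain ⟨v, -, rfl⟩ := Set.mem_smul_set.mp hw
      exact ⟨v, rfl⟩
    · rintro ⟨v, rfl⟩
      exact Submodule.smul_mem_pointwise_smul v c ⊤ Submodule.mem_top
  rw [eAnn_quot_iff] at h ⊢
  obtain ⟨u, hu1, hu2⟩ := h
  obtain ⟨v, hv⟩ := (hmem x _).mp (hu2 y hyI)
  refine ⟨v, ?_, ?_⟩
  · intro hvy
    obtain ⟨t, ht⟩ := (hmem y v).mp hvy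
    apply hu1
    refine (hmem x u).mpr ⟨t, ?_⟩
    apply hy
    show y • u = y • (x • t)
    rw [hv, ht]
    exact smul_comm x y t
  · intro a ha
    obtain ⟨w, hw⟩ := (hmem x _).mp (hu2 a ha)
    refine (hmem y _).mpr ⟨w, ?_⟩
    apply hx
    show x • (a • v) = x • (y • w)
    calc x • (a • v) = a • (x • v) := smul_comm x a v
      _ = a • (y • u) := by rw [← hv]
      _ = y • (a • u) := smul_comm a y u
      _ = y • (x • w) := by rw [hw]
      _ = x • (y • w) := smul_comm y x w

section LemB

variable [IsNoetherianRing R] [IsLocalRing R]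

lemma aux_lemB : ∀ (j : ℕ) (N : Type u) [AddCommGroup N] [Module R N] [IsNoetherian R N]
    (I : Ideal R), I ≤ maximalIdeal R → ∀ (bs as : List R),
    bs.length = j → IsWeaklyRegular N bs → (∀ r ∈ bs, r ∈ I) →
    EAnn I (N ⧸ (Ideal.ofList bs • ⊤ : Submodule R N)) →
    IsWeaklyRegular N as → (∀ r ∈ as, r ∈ I) → as.length ≤ j := by
  intro j
  induction j with
  | zero =>
    intro N _ _ _ I hIm bs as hlen hbs hbsI hE has hasI
    by_contra hcon
    push_neg at hcon
    have h0 : 0 < as.length := hcon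
    have hreg := has.regular_mod_prev 0 h0
    rw [List.take_zero] at hreg
    obtain ⟨u, hu1, hu2⟩ := hE
    have hbsnil : bs = [] := List.length_eq_zero_iff.mp hlen
    subst hbsnil
    exact hu1 (hreg (show as[0] • u = as[0] • 0 by
      rw [smul_zero]; exact hu2 _ (hasI _ (as.getElem_mem h0))))
  | succ j ih =>
    intro N _ _ _ I hIm bs as hlen hbs hbsI hE has hasI
    by_contra hcon
    push_neg at hcon
    -- hcon : j + 1 < as.length
    have hbsne : bs ≠ [] := by intro h; rw [h] at hlen; simp at hlen
    have hbs_eq : bs.dropLast ++ [bs.getLast hbsne] = bs := List.dropLast_append_getLast hbsne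
    have hbs₁len : bs.dropLast.length = j := by rw [List.length_dropLast, hlen]; omega
    have has'wr : IsWeaklyRegular N (as.take (j+2)) :=
      ((isWeaklyRegular_append_iff N (as.take (j+2)) (as.drop (j+2))).mp
        (by rw [List.take_append_drop]; exact has)).1
    have has'len : (as.take (j+2)).length = j + 2 := by rw [List.length_take]; omega
    have has'I : ∀ r ∈ as.take (j+2), r ∈ I := fun r hr => hasI r (List.take_subset _ _ hr)
    have has'ne : as.take (j+2) ≠ [] := by intro h; rw [h] at has'len; simp at has'len
    have has_eq : (as.take (j+2)).dropLast ++ [(as.take (j+2)).getLast has'ne] = as.take (j+2) :=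
      List.dropLast_append_getLast has'ne
    have has₁len : (as.take (j+2)).dropLast.length = j + 1 := by
      rw [List.length_dropLast, has'len]; omega
    have hbs_dec := (isWeaklyRegular_append_iff N bs.dropLast [bs.getLast hbsne]).mp
      (by rw [hbs_eq]; exact hbs)
    have hbs₁wr : IsWeaklyRegular N bs.dropLast := hbs_dec.1
    have hbreg : IsSMulRegular (N ⧸ (Ideal.ofList bs.dropLast • ⊤ : Submodule R N))
        (bs.getLast hbsne) := (isWeaklyRegular_singleton_iff _ _).mp hbs_dec.2
    have has_dec := (isWeaklyRegular_append_iff N (as.take (j+2)).dropLast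
      [(as.take (j+2)).getLast has'ne]).mp (by rw [has_eq]; exact has'wr)
    have has₁wr : IsWeaklyRegular N (as.take (j+2)).dropLast := has_dec.1
    have hareg : IsSMulRegular (N ⧸ (Ideal.ofList (as.take (j+2)).dropLast • ⊤ : Submodule R N))
        ((as.take (j+2)).getLast has'ne) := (isWeaklyRegular_singleton_iff _ _).mp has_dec.2
    have hbs₁I : ∀ r ∈ bs.dropLast, r ∈ I := fun r hr =>
      hbsI r ((List.dropLast_sublist bs).subset hr)
    have has₁I : ∀ r ∈ (as.take (j+2)).dropLast, r ∈ I := fun r hr =>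
      has'I r ((List.dropLast_sublist _).subset hr)
    have hbI : bs.getLast hbsne ∈ I := hbsI _ (bs.getLast_mem hbsne)
    have haI : (as.take (j+2)).getLast has'ne ∈ I := has'I _ (List.getLast_mem has'ne)
    -- choose z
    obtain ⟨z, hzI, hzPQ⟩ : ∃ z ∈ I, IsSMulRegular
        ((N ⧸ (Ideal.ofList bs.dropLast • ⊤ : Submodule R N)) ×
          (N ⧸ (Ideal.ofList (as.take (j+2)).dropLast • ⊤ : Submodule R N))) z := by
      by_contra hno
      push_neg at hno
      obtain ⟨u, hu0, huI⟩ := aux_exists_forall_smul_eq_zero hno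
      apply hu0
      have h1 : u.1 = 0 := hbreg (show _ • u.1 = _ • (0 : N ⧸ _) by
        rw [smul_zero]
        simpa using congrArg Prod.fst (huI _ hbI))
      have h2 : u.2 = 0 := hareg (show _ • u.2 = _ • (0 : N ⧸ _) by
        rw [smul_zero]
        simpa using congrArg Prod.snd (huI _ haI))
      exact Prod.ext h1 h2
    have hzP : IsSMulRegular (N ⧸ (Ideal.ofList bs.dropLast • ⊤ : Submodule R N)) z := by
      rw [isSMulRegular_iff_right_eq_zero_of_smul]
      intro m hm
      have : z • ((m, 0) : _ × (N ⧸ (Ideal.ofList (as.take (j+2)).dropLast • ⊤ : Submodule R N)))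
          = 0 := by
        rw [Prod.smul_mk, hm, smul_zero]; rfl
      have h2 := isSMulRegular_iff_right_eq_zero_of_smul.mp hzPQ _ this
      exact congrArg Prod.fst h2
    have hzQ : IsSMulRegular (N ⧸ (Ideal.ofList (as.take (j+2)).dropLast • ⊤ : Submodule R N))
        z := by
      rw [isSMulRegular_iff_right_eq_zero_of_smul]
      intro m hm
      have : z • (((0 : N ⧸ (Ideal.ofList bs.dropLast • ⊤ : Submodule R N)), m)) = 0 := by
        rw [Prod.smul_mk, hm, smul_zero]; rfl
      have h2 := isSMulRegular_iff_right_eq_zero_of_smul.mp hzPQ _ this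
      exact congrArg Prod.snd h2
    -- z-extended sequences, permuted to the front
    have hbz_wr : IsWeaklyRegular N (bs.dropLast ++ [z]) :=
      (isWeaklyRegular_append_iff N _ _).mpr ⟨hbs₁wr, (isWeaklyRegular_singleton_iff _ z).mpr hzP⟩
    have hzbs_wr : IsWeaklyRegular N (z :: bs.dropLast) :=
      IsLocalRing.isWeaklyRegular_of_perm_of_subset_maximalIdeal hbz_wr
        (List.perm_append_singleton z bs.dropLast)
        (fun r hr => by
          rcases List.mem_append.mp hr with h | h
          · exact hIm (hbs₁I r h)
          · rw [List.mem_singleton.mp h]; exact hIm hzI)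
    have hz_cons := (isWeaklyRegular_cons_iff N z bs.dropLast).mp hzbs_wr
    have haz_wr : IsWeaklyRegular N ((as.take (j+2)).dropLast ++ [z]) :=
      (isWeaklyRegular_append_iff N _ _).mpr ⟨has₁wr, (isWeaklyRegular_singleton_iff _ z).mpr hzQ⟩
    have hza_wr : IsWeaklyRegular N (z :: (as.take (j+2)).dropLast) :=
      IsLocalRing.isWeaklyRegular_of_perm_of_subset_maximalIdeal haz_wr
        (List.perm_append_singleton z _)
        (fun r hr => by
          rcases List.mem_append.mp hr with h | h
          · exact hIm (has₁I r h)
          · rw [List.mem_singleton.mp h]; exact hIm hzI)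
    have hza_cons := (isWeaklyRegular_cons_iff N z (as.take (j+2)).dropLast).mp hza_wr
    -- transfer EAnn along the exchange
    rw [← hbs_eq, Ideal.ofList_append, Ideal.ofList_singleton, Submodule.sup_smul] at hE
    have hE1 : EAnn I ((N ⧸ (Ideal.ofList bs.dropLast • ⊤ : Submodule R N)) ⧸
        (Ideal.span {bs.getLast hbsne} • ⊤ :
          Submodule R (N ⧸ (Ideal.ofList bs.dropLast • ⊤ : Submodule R N)))) :=
      (eAnn_quot_quot_iff I _ _).mpr hE
    have hE2 := aux_eAnn_exchange hzI hbreg hzP hE1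
    have hE3 : EAnn I (N ⧸ (Ideal.ofList bs.dropLast • ⊤ ⊔ Ideal.span {z} • ⊤ :
        Submodule R N)) := (eAnn_quot_quot_iff I _ _).mp hE2
    have hE4 : EAnn I ((QuotSMulTop z N) ⧸
        (Ideal.ofList bs.dropLast • ⊤ : Submodule R (QuotSMulTop z N))) := by
      apply (eAnn_quot_quot_iff I (z • ⊤ : Submodule R N) (Ideal.ofList bs.dropLast)).mpr
      rw [show (z • ⊤ ⊔ Ideal.ofList bs.dropLast • ⊤ : Submodule R N) =
          Ideal.ofList bs.dropLast • ⊤ ⊔ Ideal.span {z} • ⊤ by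
        rw [Submodule.ideal_span_singleton_smul, sup_comm]]
      exact hE3
    have hfin := ih (QuotSMulTop z N) I hIm bs.dropLast (as.take (j+2)).dropLast
      hbs₁len hz_cons.2 hbs₁I hE4 hza_cons.2 has₁I
    omega

end LemB

lemma aux_replicate_wr : ∀ (n : ℕ) (M : Type u) [AddCommGroup M] [Module R M],
    IsWeaklyRegular M (List.replicate n (1 : R))
  | 0, M, _, _ => .nil R M
  | (n+1), M, _, _ => by
    rw [List.replicate_succ, isWeaklyRegular_cons_iff]
    exact ⟨IsSMulRegular.one M, aux_replicate_wr n _⟩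

end Aux

/-- Equivalence of: (i) every `M`-regular sequence of elements of the maximal ideal is
`R`-regular; (ii) `depth_R(I, M) ≤ depth_R(I, R)` for all ideals `I`;
(iii) `depth_R(p, M) ≤ depth_R(p, R)` for all primes `p`. -/
theorem stmt2 {R : Type*} [CommRing R] [IsNoetherianRing R] [IsLocalRing R]
    (M : Type*) [AddCommGroup M] [Module R M] [Module.Finite R M] [Nontrivial M] :
    List.TFAE
      [∀ rs : List R, (∀ x ∈ rs, x ∈ maximalIdeal R) →
          RingTheory.Sequence.IsRegular M rs → RingTheory.Sequence.IsRegular R rs,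
       ∀ I : Ideal R, rdepth I M ≤ rdepth I R,
       ∀ p : Ideal R, p.IsPrime → rdepth p M ≤ rdepth p R] := by
  tfae_have 1 → 2 := by
    intro h1 I
    refine sSup_le ?_
    rintro n ⟨rs, rfl, hIels, hwr⟩
    by_cases hIt : I = ⊤
    · subst hIt
      exact le_sSup ⟨List.replicate rs.length 1, by rw [List.length_replicate],
        fun r _ => Submodule.mem_top, aux_replicate_wr _ _⟩
    · have hIm : I ≤ maximalIdeal R := le_maximalIdeal hIt
      have hm : ∀ r ∈ rs, r ∈ maximalIdeal R := fun r hr => hIm (hIels r hr)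
      have hreg : RingTheory.Sequence.IsRegular M rs :=
        (IsLocalRing.isRegular_iff_isWeaklyRegular_of_subset_maximalIdeal hm).mpr hwr
      exact le_sSup ⟨rs, rfl, hIels, (h1 rs hm hreg).toIsWeaklyRegular⟩
  tfae_have 2 → 3 := fun h p _ => h p
  tfae_have 3 → 1 := by
    intro h3 rs hm hreg
    rw [IsLocalRing.isRegular_iff_isWeaklyRegular_of_subset_maximalIdeal hm]
    have key : ∀ i, IsWeaklyRegular R (rs.take i) := by
      intro i
      induction i with
      | zero => rw [List.take_zero]; exact .nil R R
      | succ i ihh =>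
        by_cases hi : i < rs.length
        · rw [← List.take_concat_get' rs i hi]
          rw [isWeaklyRegular_append_iff]
          refine ⟨ihh, (isWeaklyRegular_singleton_iff _ _).mpr ?_⟩
          by_contra hnreg
          have hx_union : rs[i] ∈ ⋃ p ∈ associatedPrimes R
              (R ⧸ (Ideal.ofList (rs.take i) • ⊤ : Submodule R R)), (p : Set R) := by
            rw [biUnion_associatedPrimes_eq_compl_regular]
            exact hnreg
          obtain ⟨pS, hpS, hxp⟩ := Set.mem_iUnion₂.mp hx_union
          obtain ⟨hp1, u, hu⟩ := aux_iap_iff.mp hpS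
          have hu0 : u ≠ 0 := by
            rintro rfl
            exact hp1.ne_top
              (by rw [hu, Submodule.span_zero_singleton, Submodule.annihilator_bot])
          have htakep : ∀ r ∈ rs.take i, r ∈ pS := by
            intro r hr
            rw [hu, Submodule.mem_annihilator_span_singleton]
            obtain ⟨w, rfl⟩ := Submodule.Quotient.mk_surjective _ u
            rw [← Submodule.Quotient.mk_smul, Submodule.Quotient.mk_eq_zero]
            exact Submodule.smul_mem_smul (Ideal.subset_span hr) Submodule.mem_top
          have hpm : pS ≤ maximalIdeal R := le_maximalIdeal hp1.ne_top
          have htake1 : IsWeaklyRegular M (rs.take (i+1)) :=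
            ((isWeaklyRegular_append_iff M _ _).mp
              (by rw [List.take_append_drop]; exact hreg.toIsWeaklyRegular)).1
          have htake1p : ∀ r ∈ rs.take (i+1), r ∈ pS := by
            intro r hr
            rw [← List.take_concat_get' rs i hi] at hr
            rcases List.mem_append.mp hr with h | h
            · exact htakep r h
            · rw [List.mem_singleton.mp h]; exact hxp
          have hlen1 : (rs.take (i+1)).length = i + 1 := by rw [List.length_take]; omega
          have hle1 : (((i:ℕ)+1 : ℕ) : ℕ∞) ≤ rdepth pS M :=
            le_sSup ⟨rs.take (i+1), by rw [hlen1], htake1p, htake1⟩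
          have hlt : ((i : ℕ) : ℕ∞) < rdepth pS R := by
            refine lt_of_lt_of_le (lt_of_lt_of_le ?_ hle1) (h3 pS hp1)
            exact_mod_cast Nat.lt_succ_self i
          obtain ⟨nn, hnnS, hnlt⟩ := lt_sSup_iff.mp hlt
          obtain ⟨cs, hcslen, hcsp, hcswr⟩ := hnnS
          have hcs_big : i < cs.length := by
            rw [← hcslen] at hnlt
            exact_mod_cast hnlt
          have hEE : EAnn pS (R ⧸ (Ideal.ofList (rs.take i) • ⊤ : Submodule R R)) :=
            ⟨u, hu0, fun ap hap => by
              rwa [hu, Submodule.mem_annihilator_span_singleton] at hap⟩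
          have hfinal := aux_lemB i R pS hpm (rs.take i) cs
            (by rw [List.length_take]; omega) ihh htakep hEE hcswr hcsp
          omega
        · rw [List.take_of_length_le (by omega)]
          rw [List.take_of_length_le (by omega)] at ihh
          exact ihh
    have := key rs.length
    rwa [List.take_length] at this
  tfae_finish
end

section
/- Let R = k[[x,y]]/(xy), p = (x), q = (y). Then p ⊗_R q ≅ k as R-modules; in particular, p ⊗_R q is not a reflexive R-module. -/
open RingTheory.Sequence IsLocalRing CategoryTheory CategoryTheory.Limits
open scoped TensorProduct

section Abstract

variable {R : Type*} [CommRing R] (u v : R)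

/-- `R ⧸ (v) ≃ (u)` when the annihilator of `u` is `(v)`. -/
noncomputable def quotEquivSpan (h1 : ∀ r : R, r * u = 0 ↔ r ∈ Ideal.span {v}) :
    (R ⧸ Ideal.span {v}) ≃ₗ[R] ↥(Ideal.span {u}) := by
  let f : R →ₗ[R] ↥(Ideal.span {u}) :=
    LinearMap.toSpanSingleton R _ ⟨u, Ideal.mem_span_singleton_self u⟩
  have hker : LinearMap.ker f = (Ideal.span {v} : Ideal R) := by
    ext r
    simp only [LinearMap.mem_ker, f, LinearMap.toSpanSingleton_apply]
    rw [← h1 r]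
    constructor
    · intro h
      have := congrArg (Subtype.val) h
      simpa [smul_eq_mul] using this
    · intro h
      ext
      simpa [smul_eq_mul] using h
  have hsurj : Function.Surjective f := by
    rintro ⟨m, hm⟩
    obtain ⟨c, hc⟩ := Ideal.mem_span_singleton'.1 hm
    exact ⟨c, by ext; simpa [f, smul_eq_mul] using hc⟩
  exact (Submodule.quotEquivOfEq _ _ hker.symm).trans (f.quotKerEquivOfSurjective hsurj)

theorem abstract_main
    (h1 : ∀ r : R, r * u = 0 ↔ r ∈ Ideal.span {v})
    (h2 : ∀ r : R, r * v = 0 ↔ r ∈ Ideal.span {u})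
    (h3 : ∀ r : R, r * u = 0 → r * v = 0 → r = 0)
    (h4 : Ideal.span {u, v} ≠ ⊤) :
    Nonempty ((↥(Ideal.span {u}) ⊗[R] ↥(Ideal.span {v})) ≃ₗ[R] (R ⧸ Ideal.span {u, v})) ∧
    ¬ Function.Bijective
        (Module.Dual.eval R (↥(Ideal.span {u}) ⊗[R] ↥(Ideal.span {v}))) := by
  have hsup : Ideal.span {u, v} = Ideal.span {u} ⊔ Ideal.span {v} := by
    rw [Ideal.span_insert]
  have hsmul : (Ideal.span {v} • (⊤ : Submodule R (R ⧸ (Ideal.span {u} : Ideal R))))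
      = Submodule.map (Ideal.span {u} : Ideal R).mkQ (Ideal.span {u} ⊔ Ideal.span {v}) := by
    apply le_antisymm
    · rw [Submodule.smul_le]
      rintro a ha n -
      obtain ⟨r, rfl⟩ := (Ideal.span {u} : Ideal R).mkQ_surjective n
      refine ⟨a * r, ?_, ?_⟩
      · exact Submodule.mem_sup_right (Ideal.mul_mem_right r _ ha)
      · rw [Submodule.mkQ_apply, Submodule.mkQ_apply, ← Submodule.Quotient.mk_smul, smul_eq_mul]
    · rw [Submodule.map_le_iff_le_comap]
      intro r hr
      rw [Submodule.mem_sup] at hr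
      obtain ⟨p, hp, q, hq, rfl⟩ := hr
      simp only [Submodule.mem_comap, Submodule.mkQ_apply, Submodule.Quotient.mk_add]
      have hp0 : (Submodule.Quotient.mk p : R ⧸ (Ideal.span {u} : Ideal R)) = 0 :=
        (Submodule.Quotient.mk_eq_zero _).2 hp
      rw [hp0, zero_add]
      have : (Submodule.Quotient.mk q : R ⧸ (Ideal.span {u} : Ideal R))
          = q • Submodule.Quotient.mk (1 : R) := by
        rw [← Submodule.Quotient.mk_smul, smul_eq_mul, mul_one]
      rw [this]
      exact Submodule.smul_mem_smul hq Submodule.mem_top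
  let e : (↥(Ideal.span {u}) ⊗[R] ↥(Ideal.span {v})) ≃ₗ[R] (R ⧸ Ideal.span {u, v}) :=
    (TensorProduct.congr (quotEquivSpan u v h1).symm (quotEquivSpan v u h2).symm).trans <|
      (TensorProduct.quotTensorEquivQuotSMul (R ⧸ (Ideal.span {u} : Ideal R))
        (Ideal.span {v})).trans <|
      (Submodule.quotEquivOfEq _ _ hsmul).trans <|
      (Submodule.quotientQuotientEquivQuotient (Ideal.span {u} : Ideal R)
        (Ideal.span {u} ⊔ Ideal.span {v}) le_sup_left).trans <|
      Submodule.quotEquivOfEq _ _ hsup.symm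
  refine ⟨⟨e⟩, ?_⟩
  -- nontriviality
  haveI hnt : Nontrivial (R ⧸ Ideal.span {u, v}) := Ideal.Quotient.nontrivial_iff.mpr h4
  have hdual : ∀ φ : Module.Dual R (R ⧸ Ideal.span {u, v}), φ = 0 := by
    intro φ
    set c := φ (Submodule.Quotient.mk (1 : R)) with hc
    have key : ∀ w : R, w ∈ Ideal.span {u, v} → w * c = 0 := by
      intro w hw
      have hw0 : (Submodule.Quotient.mk w : R ⧸ Ideal.span {u, v}) = 0 :=
        (Submodule.Quotient.mk_eq_zero _).2 hw
      have : w • (Submodule.Quotient.mk (1 : R) : R ⧸ Ideal.span {u, v}) = 0 := by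
        rw [← Submodule.Quotient.mk_smul, smul_eq_mul, mul_one, hw0]
      calc w * c = φ (w • Submodule.Quotient.mk (1 : R)) := by rw [map_smul]; rfl
        _ = 0 := by rw [this, map_zero]
    have hc0 : c = 0 := by
      have hu : c * u = 0 := by
        rw [mul_comm]; exact key u (Ideal.subset_span (by simp))
      have hv : c * v = 0 := by
        rw [mul_comm]; exact key v (Ideal.subset_span (by simp))
      exact h3 c hu hv
    apply LinearMap.ext
    intro z
    obtain ⟨r, rfl⟩ := Submodule.Quotient.mk_surjective _ z
    have : (Submodule.Quotient.mk r : R ⧸ Ideal.span {u, v})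
        = r • Submodule.Quotient.mk (1 : R) := by
      rw [← Submodule.Quotient.mk_smul, smul_eq_mul, mul_one]
    rw [this, map_smul, ← hc, hc0, smul_zero]
    rfl
  haveI hsub : Subsingleton (Module.Dual R ((↥(Ideal.span {u}) ⊗[R] ↥(Ideal.span {v})))) := by
    have h : Subsingleton (Module.Dual R (R ⧸ Ideal.span {u, v})) :=
      ⟨fun a b => by rw [hdual a, hdual b]⟩
    exact Equiv.subsingleton (e.dualMap.toEquiv.symm)
  haveI hsub2 : Subsingleton (Module.Dual R
      (Module.Dual R ((↥(Ideal.span {u}) ⊗[R] ↥(Ideal.span {v}))))) :=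
    ⟨fun f g => LinearMap.ext fun m => by rw [Subsingleton.elim m 0, map_zero, map_zero]⟩
  haveI hnt2 : Nontrivial ((↥(Ideal.span {u}) ⊗[R] ↥(Ideal.span {v}))) :=
    e.toEquiv.nontrivial
  rintro ⟨hinj, -⟩
  obtain ⟨m, m', hmm'⟩ := hnt2
  exact hmm' (hinj (Subsingleton.elim _ _))

end Abstract

section PS
open MvPowerSeries
set_option maxHeartbeats 1000000

variable {k : Type*} [Field k]

private lemma X_dvd_of_dvd_mul_X {i j : Fin 2} (hij : i ≠ j) {r : MvPowerSeries (Fin 2) k}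
    (h : (X j : MvPowerSeries (Fin 2) k) ∣ r * X i) : (X j : MvPowerSeries (Fin 2) k) ∣ r := by
  rw [X_dvd_iff] at h ⊢
  intro m hm
  have h2 := h (m + Finsupp.single i 1) (by
    simp [Finsupp.add_apply, hm, Finsupp.single_eq_of_ne' hij])
  rwa [X_def, coeff_add_mul_monomial, mul_one] at h2

private lemma mul_X_dvd {r : MvPowerSeries (Fin 2) k}
    (h0 : (X 0 : MvPowerSeries (Fin 2) k) ∣ r) (h1 : (X 1 : MvPowerSeries (Fin 2) k) ∣ r) :
    (X 0 * X 1 : MvPowerSeries (Fin 2) k) ∣ r := by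
  obtain ⟨a, rfl⟩ := h1
  have ha : (X 0 : MvPowerSeries (Fin 2) k) ∣ a := by
    have h0' : (X 0 : MvPowerSeries (Fin 2) k) ∣ a * X 1 := by rwa [mul_comm] at h0
    exact X_dvd_of_dvd_mul_X (by decide) h0'
  obtain ⟨c, rfl⟩ := ha
  exact ⟨c, by ring⟩

private lemma dvd_of_mem_span (i j : Fin 2) (hij : i ≠ j) (r' : MvPowerSeries (Fin 2) k)
    (h : r' * X i ∈ Ideal.span {(X 0 * X 1 : MvPowerSeries (Fin 2) k)}) :
    (X j : MvPowerSeries (Fin 2) k) ∣ r' := by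
  rw [Ideal.mem_span_singleton] at h
  have hj : (X j : MvPowerSeries (Fin 2) k) ∣ X 0 * X 1 := by
    obtain rfl | rfl := (by decide : ∀ m : Fin 2, m = 0 ∨ m = 1) j
    · exact dvd_mul_right _ _
    · exact dvd_mul_left _ _
  exact X_dvd_of_dvd_mul_X hij (dvd_trans hj h)

private lemma ann_lemma (i j : Fin 2) (hij : i ≠ j)
    (r : MvPowerSeries (Fin 2) k ⧸
      Ideal.span {(X 0 * X 1 : MvPowerSeries (Fin 2) k)}) :
    r * Ideal.Quotient.mk _ (X i) = 0 ↔
      r ∈ Ideal.span {Ideal.Quotient.mk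
        (Ideal.span {(X 0 * X 1 : MvPowerSeries (Fin 2) k)}) (X j)} := by
  obtain ⟨r', rfl⟩ := Ideal.Quotient.mk_surjective r
  constructor
  · intro h
    rw [← map_mul, Ideal.Quotient.eq_zero_iff_mem] at h
    rw [Ideal.mem_span_singleton]
    exact map_dvd (Ideal.Quotient.mk _) (dvd_of_mem_span i j hij r' h)
  · intro h
    rw [Ideal.mem_span_singleton] at h
    obtain ⟨c, hc⟩ := h
    have hji : (Ideal.Quotient.mk (Ideal.span {(X 0 * X 1 : MvPowerSeries (Fin 2) k)}) (X j))
        * Ideal.Quotient.mk _ (X i) = 0 := by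
      rw [← map_mul, Ideal.Quotient.eq_zero_iff_mem]
      have : (X j * X i : MvPowerSeries (Fin 2) k) = X 0 * X 1 := by
        obtain rfl | rfl := (by decide : ∀ m : Fin 2, m = 0 ∨ m = 1) i <;>
          obtain rfl | rfl := (by decide : ∀ m : Fin 2, m = 0 ∨ m = 1) j <;>
          first
          | exact absurd rfl hij
          | rw [mul_comm]
          | rfl
      rw [this]
      exact Ideal.mem_span_singleton_self _
    rw [hc, mul_comm _ c, mul_assoc, hji, mul_zero]

private lemma ann_both (r : MvPowerSeries (Fin 2) k ⧸
      Ideal.span {(X 0 * X 1 : MvPowerSeries (Fin 2) k)})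
    (h0 : r * Ideal.Quotient.mk _ (X 0) = 0)
    (h1 : r * Ideal.Quotient.mk _ (X 1) = 0) : r = 0 := by
  obtain ⟨r', rfl⟩ := Ideal.Quotient.mk_surjective r
  rw [← map_mul, Ideal.Quotient.eq_zero_iff_mem] at h0 h1
  have d1 : (X 1 : MvPowerSeries (Fin 2) k) ∣ r' := dvd_of_mem_span 0 1 (by decide) r' h0
  have d0 : (X 0 : MvPowerSeries (Fin 2) k) ∣ r' := dvd_of_mem_span 1 0 (by decide) r' h1
  rw [Ideal.Quotient.eq_zero_iff_mem, Ideal.mem_span_singleton]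
  exact mul_X_dvd d0 d1

private lemma span_ne_top :
    Ideal.span {Ideal.Quotient.mk
        (Ideal.span {(X 0 * X 1 : MvPowerSeries (Fin 2) k)}) (X 0),
      Ideal.Quotient.mk _ (X 1)} ≠ ⊤ := by
  have hlift : ∀ a ∈ Ideal.span {(X 0 * X 1 : MvPowerSeries (Fin 2) k)},
      constantCoeff (σ := Fin 2) (R := k) a = 0 := by
    intro a ha
    rw [Ideal.mem_span_singleton] at ha
    obtain ⟨c, rfl⟩ := ha
    simp [constantCoeff_X]
  set ψ := Ideal.Quotient.lift _ (constantCoeff (σ := Fin 2) (R := k)) hlift with hψ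
  intro htop
  have hle : Ideal.span {Ideal.Quotient.mk
        (Ideal.span {(X 0 * X 1 : MvPowerSeries (Fin 2) k)}) (X 0),
      Ideal.Quotient.mk _ (X 1)} ≤ RingHom.ker ψ := by
    rw [Ideal.span_le]
    rintro z (rfl | rfl) <;>
      simp [RingHom.mem_ker, hψ, Ideal.Quotient.lift_mk, constantCoeff_X]
  have h1 : (1 : MvPowerSeries (Fin 2) k ⧸
      Ideal.span {(X 0 * X 1 : MvPowerSeries (Fin 2) k)}) ∈ RingHom.ker ψ :=
    hle (htop ▸ Submodule.mem_top)
  rw [RingHom.mem_ker, map_one] at h1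
  exact one_ne_zero h1

end PS

set_option synthInstance.maxHeartbeats 1000000 in
set_option maxHeartbeats 1000000 in
/-- In `R = k[[x,y]]/(xy)` with minimal primes `p = (x)` and `q = (y)`:
`p ⊗_R q ≅ R/(x,y) (≅ k)`, and in particular `p ⊗_R q` is not reflexive. -/
theorem stmt11 {k : Type*} [Field k]
    (x y :
      MvPowerSeries (Fin 2) k ⧸
        Ideal.span {(MvPowerSeries.X 0 * MvPowerSeries.X 1 : MvPowerSeries (Fin 2) k)})
    (hx : x = Ideal.Quotient.mk _ (MvPowerSeries.X 0))
    (hy : y = Ideal.Quotient.mk _ (MvPowerSeries.X 1)) :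
    Nonempty
      ((↥(Ideal.span {x}) ⊗[MvPowerSeries (Fin 2) k ⧸
          Ideal.span {(MvPowerSeries.X 0 * MvPowerSeries.X 1 : MvPowerSeries (Fin 2) k)}]
        ↥(Ideal.span {y})) ≃ₗ[MvPowerSeries (Fin 2) k ⧸
          Ideal.span {(MvPowerSeries.X 0 * MvPowerSeries.X 1 : MvPowerSeries (Fin 2) k)}]
        (_ ⧸ (Ideal.span {x, y}))) ∧
    ¬ Function.Bijective
        (Module.Dual.eval
          (MvPowerSeries (Fin 2) k ⧸
            Ideal.span {(MvPowerSeries.X 0 * MvPowerSeries.X 1 : MvPowerSeries (Fin 2) k)})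
          (↥(Ideal.span {x}) ⊗[MvPowerSeries (Fin 2) k ⧸
            Ideal.span {(MvPowerSeries.X 0 * MvPowerSeries.X 1 : MvPowerSeries (Fin 2) k)}]
          ↥(Ideal.span {y}))) := by
  subst hx hy
  exact abstract_main _ _ (ann_lemma 0 1 (by decide)) (ann_lemma 1 0 (by decide))
    ann_both span_ne_top
end

section
/- Let R be a commutative Noetherian local ring and let M be a nonzero finitely generated Tor-rigid R-module. Then every M-regular element of the maximal ideal is a nonzerodivisor on R. -/
open RingTheory.Sequence IsLocalRing CategoryTheory CategoryTheory.Limits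
open scoped TensorProduct

section TorRigidAux

open CategoryTheory.Projective

universe v

variable {R : Type v} [CommRing R]

/-- Multiplication by `x`, as a morphism in `ModuleCat R`. -/
noncomputable def fmul (x : R) : ModuleCat.of R R ⟶ ModuleCat.of R R :=
  ModuleCat.ofHom (LinearMap.lsmul R R x)

/-- A projective resolution of `R ⧸ (x)` starting `⋯ → syzygies → R —x→ R`. -/
noncomputable def xResComplex (x : R) : ChainComplex (ModuleCat.{v} R) ℕ :=
  ChainComplex.mk (ModuleCat.of R R) (ModuleCat.of R R) (syzygies (fmul x))
    (fmul x) (d (fmul x))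
    (show d (fmul x) ≫ fmul x = 0 from
      (Category.assoc (π (kernel (fmul x))) (kernel.ι (fmul x)) (fmul x)).trans
      (by rw [kernel.condition]; exact comp_zero))
    (fun S => ⟨syzygies S.f, d S.f,
      show d S.f ≫ S.f = 0 from
      (Category.assoc (π (kernel S.f)) (kernel.ι S.f) S.f).trans (by rw [kernel.condition]; exact comp_zero)⟩)

lemma xResComplex_d_1_0 (x : R) : (xResComplex x).d 1 0 = fmul x :=
  ChainComplex.mk_d_1_0 _ _ _ _ _ _ _

lemma xResComplex_d_2_1 (x : R) : (xResComplex x).d 2 1 = d (fmul x) :=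
  ChainComplex.mk_d_2_1 _ _ _ _ _ _ _

lemma xResComplex_d_3_2 (x : R) : (xResComplex x).d 3 2 = d (d (fmul x)) := by
  show (xResComplex x).d (2 + 1) 2 = d (d (fmul x))
  delta xResComplex ChainComplex.mk
  rfl

instance xResComplex_projective (x : R) (n : ℕ) : Projective ((xResComplex x).X n) := by
  obtain (_ | _ | _ | n) := n
  · exact ModuleCat.projective_of_free (Module.Basis.singleton PUnit.{1} R)
  · exact ModuleCat.projective_of_free (Module.Basis.singleton PUnit.{1} R)
  · apply Projective.projective_over
  · apply Projective.projective_over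

lemma xResComplex_exactAt_succ (x : R) (n : ℕ) : (xResComplex x).ExactAt (n + 1) := by
  rw [HomologicalComplex.exactAt_iff' _ (n + 1 + 1) (n + 1) n (by simp) (by simp)]
  dsimp [xResComplex, HomologicalComplex.sc', HomologicalComplex.shortComplexFunctor',
    ChainComplex.mk]
  simp only [ChainComplex.of, ChainComplex.of.d, ↓reduceDIte, eqToHom_refl, Category.id_comp]
  match n with
  | 0 => apply exact_d_f
  | 1 => apply exact_d_f
  | (n + 2) => apply exact_d_f

/-- The augmentation map. -/
noncomputable def xResPi (x : R) :
    ModuleCat.of R R ⟶ ModuleCat.of R (R ⧸ (Ideal.span {x} : Ideal R)) :=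
  ModuleCat.ofHom (Ideal.span {x} : Ideal R).mkQ

lemma xres_comp_zero (x : R) : fmul x ≫ xResPi x = 0 := by
  apply ModuleCat.hom_ext; apply LinearMap.ext; intro r
  show (Ideal.span {x} : Ideal R).mkQ (x • r) = 0
  rw [Submodule.mkQ_apply, Submodule.Quotient.mk_eq_zero]
  exact Ideal.mem_span_singleton.mpr (dvd_mul_right x r)

lemma xres_exact (x : R) :
    (ShortComplex.mk (fmul x) (xResPi x) (xres_comp_zero x)).Exact := by
  rw [ShortComplex.moduleCat_exact_iff_range_eq_ker]
  show LinearMap.range (LinearMap.lsmul R R x)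
      = LinearMap.ker (Ideal.span {x} : Ideal R).mkQ
  rw [Submodule.ker_mkQ]
  ext r
  simp only [LinearMap.mem_range, LinearMap.lsmul_apply, smul_eq_mul,
    Ideal.mem_span_singleton]
  exact ⟨fun ⟨a, ha⟩ => ⟨a, ha.symm⟩, fun ⟨a, ha⟩ => ⟨a, ha.symm⟩⟩

instance xResPi_epi (x : R) : Epi (xResPi x) :=
  (ModuleCat.epi_iff_surjective _).2 (Submodule.mkQ_surjective _)

/-- The projective resolution of `R ⧸ (x)`. -/
noncomputable def xRes (x : R) :
    ProjectiveResolution (ModuleCat.of R (R ⧸ (Ideal.span {x} : Ideal R))) where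
  complex := xResComplex x
  π := (ChainComplex.toSingle₀Equiv _ _).symm
    ⟨xResPi x, by
      rw [xResComplex_d_1_0]
      exact xres_comp_zero x⟩
  quasiIso := ⟨fun n => by
    cases n with
    | zero =>
      rw [ChainComplex.quasiIsoAt₀_iff, ShortComplex.quasiIso_iff_of_zeros']
      · refine (ShortComplex.exact_and_epi_g_iff_of_iso ?_).2 ⟨xres_exact x, xResPi_epi x⟩
        refine ShortComplex.isoMk (Iso.refl _) (Iso.refl _) (Iso.refl _) ?_ ?_
        · exact (Category.id_comp _).trans (Category.comp_id _).symm
        · exact (Category.id_comp _).trans (Category.comp_id _).symm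
      all_goals rfl
    | succ n =>
      rw [quasiIsoAt_iff_exactAt']
      · apply xResComplex_exactAt_succ
      · apply ChainComplex.exactAt_succ_single_obj⟩

end TorRigidAux

/-- If `M` is a nonzero finitely generated Tor-rigid module over a Noetherian local ring,
then every `M`-regular element of the maximal ideal is a nonzerodivisor on `R`. -/
theorem stmt14 {R : Type u} [CommRing R] [IsNoetherianRing R] [IsLocalRing R]
    (M : Type u) [AddCommGroup M] [Module R M] [Module.Finite R M] [Nontrivial M]
    (hrigid : ∀ (N : Type u) [AddCommGroup N] [Module R N] [Module.Finite R N],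
      IsZero (((Tor (ModuleCat R) 1).obj (ModuleCat.of R M)).obj (ModuleCat.of R N)) →
      IsZero (((Tor (ModuleCat R) 2).obj (ModuleCat.of R M)).obj (ModuleCat.of R N))) :
    ∀ x ∈ maximalIdeal R, IsSMulRegular M x → IsSMulRegular R x := by
  intro x _hx hMx
  classical
  let P : ProjectiveResolution (ModuleCat.of R (R ⧸ (Ideal.span {x} : Ideal R))) := xRes x
  let F := (MonoidalCategory.tensoringLeft (ModuleCat.{u} R)).obj (ModuleCat.of R M)
  let Q := (F.mapHomologicalComplex (ComplexShape.down ℕ)).obj P.complex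
  have e : ∀ n : ℕ, (((Tor (ModuleCat R) n).obj (ModuleCat.of R M)).obj
      (ModuleCat.of R (R ⧸ (Ideal.span {x} : Ideal R)))) ≅ Q.homology n :=
    fun n => P.isoLeftDerivedObj F n
  -- Step 1: Tor₁ = 0 because `x` is `M`-regular.
  have hsmul : ∀ z : M ⊗[R] R, (F.map (fmul x)) z = x • z := by
    intro z
    induction z using TensorProduct.induction_on with
    | zero => simp
    | tmul m r =>
      show m ⊗ₜ[R] (x • r) = x • (m ⊗ₜ[R] r)
      rw [TensorProduct.tmul_smul]
    | add a b ha hb => rw [map_add, ha, hb, smul_add]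
  have hexact1 : Q.ExactAt 1 := by
    rw [Q.exactAt_iff' 2 1 0 (by simp) (by simp), ShortComplex.moduleCat_exact_iff]
    intro z hz
    have hd : (Q.sc' 2 1 0).g = F.map ((xResComplex x).d 1 0) := rfl
    rw [hd, xResComplex_d_1_0] at hz
    have hz' : x • z = (0 : M ⊗[R] R) := (hsmul z).symm.trans hz
    have hreg : IsSMulRegular (M ⊗[R] R) x := by
      intro a b hab
      have h1 := congrArg (TensorProduct.rid R M) hab
      simp only [map_smul] at h1
      exact (TensorProduct.rid R M).injective (hMx h1)
    have hz0 : z = (0 : M ⊗[R] R) :=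
      hreg (show x • z = x • (0 : M ⊗[R] R) by rw [hz', smul_zero])
    exact ⟨0, by rw [map_zero]; exact hz0.symm⟩
  have hTor1 : IsZero (((Tor (ModuleCat R) 1).obj (ModuleCat.of R M)).obj
      (ModuleCat.of R (R ⧸ (Ideal.span {x} : Ideal R)))) :=
    ((Q.exactAt_iff_isZero_homology 1).1 hexact1).of_iso (e 1)
  -- Step 2: rigidity gives Tor₂ = 0.
  have hTor2 := hrigid (R ⧸ (Ideal.span {x} : Ideal R)) hTor1
  have hexact2' : Q.ExactAt 2 :=
    (Q.exactAt_iff_isZero_homology 2).2 (hTor2.of_iso (e 2).symm)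
  rw [Q.exactAt_iff' 3 2 1 (by simp) (by simp), ShortComplex.moduleCat_exact_iff] at hexact2'
  -- `J` is the annihilator of `x`; `J • M = 0`.
  set J : Submodule R R := LinearMap.ker (fmul x).hom with hJ
  have hJM : ∀ (j : J) (m : M), (j : R) • m = 0 := by
    intro j m
    have hxj : x * (j : R) = 0 := j.2
    apply hMx
    show x • ((j : R) • m) = x • (0 : M)
    rw [smul_smul, hxj, zero_smul, smul_zero]
  let ι' : ModuleCat.of R J ⟶ ModuleCat.of R R := ModuleCat.ofHom J.subtype
  let π' : (xResComplex x).X 2 ⟶ ModuleCat.of R J :=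
    Projective.π (kernel (fmul x)) ≫ (ModuleCat.kernelIsoKer (fmul x)).hom
  have hfactor : Projective.d (fmul x) = π' ≫ ι' := by
    show Projective.π (kernel (fmul x)) ≫ kernel.ι (fmul x) = _
    exact (congrArg (Projective.π (kernel (fmul x)) ≫ ·)
      (ModuleCat.kernelIsoKer_hom_ker_subtype (fmul x)).symm).trans (Category.assoc _ _ _).symm
  have hι'zero : F.map ι' = 0 := by
    apply ModuleCat.hom_ext
    apply TensorProduct.ext'
    rintro m ⟨jv, hjv⟩
    show m ⊗ₜ[R] jv = 0
    have h0 : jv • m = 0 := hJM ⟨jv, hjv⟩ m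
    calc m ⊗ₜ[R] jv = m ⊗ₜ[R] (jv • (1 : R)) := by rw [smul_eq_mul, mul_one]
      _ = (jv • m) ⊗ₜ[R] (1 : R) := (TensorProduct.smul_tmul _ _ _).symm
      _ = 0 := by rw [h0, TensorProduct.zero_tmul]
  have hπ'surj : Function.Surjective (F.map π') := by
    have h1 : Function.Surjective π' := by
      rw [← ModuleCat.epi_iff_surjective]
      exact @epi_comp _ _ _ _ _ (Projective.π (kernel (fmul x))) (Projective.π_epi _) _ _
    intro t
    induction t using TensorProduct.induction_on with
    | zero => exact ⟨0, map_zero _⟩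
    | tmul m j =>
      obtain ⟨v, hv⟩ := h1 j
      exact ⟨m ⊗ₜ v, by show m ⊗ₜ[R] (π' v) = m ⊗ₜ[R] j; rw [hv]⟩
    | add a b ha hb =>
      obtain ⟨za, hza⟩ := ha
      obtain ⟨zb, hzb⟩ := hb
      exact ⟨za + zb, by rw [map_add, hza, hzb]⟩
  -- M ⊗ J = 0
  have hMJ : ∀ t : M ⊗[R] J, t = 0 := by
    intro t
    obtain ⟨z, hz⟩ := hπ'surj t
    have hz0 : Q.d 2 1 z = 0 := by
      have hd : Q.d 2 1 = F.map π' ≫ F.map ι' := by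
        show F.map ((xResComplex x).d 2 1) = _
        rw [xResComplex_d_2_1, hfactor]
        exact F.map_comp _ _
      rw [hd]
      show (F.map ι') ((F.map π') z) = 0
      rw [hι'zero]
      rfl
    obtain ⟨w, hw⟩ := hexact2' z hz0
    have hcomp : (xResComplex x).d 3 2 ≫ π' = 0 := by
      have hmono : Mono ι' := (ModuleCat.mono_iff_injective _).2 Subtype.val_injective
      rw [← cancel_mono (f := ι'), Category.assoc, ← hfactor, ← xResComplex_d_2_1,
]
      exact ((xResComplex x).d_comp_d 3 2 1).trans zero_comp.symm
    have hw' : (F.map ((xResComplex x).d 3 2)) w = z := hw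
    have h2 : F.map ((xResComplex x).d 3 2) ≫ F.map π' = 0 := by
      rw [← F.map_comp, hcomp, F.map_zero]
    calc t = (F.map π') z := hz.symm
      _ = (F.map π') ((F.map ((xResComplex x).d 3 2)) w) := by rw [hw']
      _ = (F.map ((xResComplex x).d 3 2) ≫ F.map π') w := rfl
      _ = (0 : F.obj ((xResComplex x).X 3) ⟶ F.obj (ModuleCat.of R J)) w := by rw [h2]
      _ = 0 := rfl
  haveI hMJss : Subsingleton (M ⊗[R] J) := subsingleton_of_forall_eq 0 fun t => hMJ t
  -- Nakayama: J = 0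
  haveI : Module.Finite R J := Module.Finite.iff_fg.2 (IsNoetherian.noetherian J)
  haveI hntMk : Nontrivial (ResidueField R ⊗[R] M) := by
    rw [← not_subsingleton_iff_nontrivial]
    intro h
    exact (not_subsingleton M) ((IsLocalRing.subsingleton_tensorProduct).1 h)
  let b := Module.Basis.ofVectorSpace (ResidueField R) (ResidueField R ⊗[R] M)
  obtain ⟨i⟩ := b.index_nonempty
  have hψnz : ∃ m : M, b.coord i ((1 : ResidueField R) ⊗ₜ m) ≠ 0 := by
    by_contra h
    push_neg at h
    have hzero : ∀ v : ResidueField R ⊗[R] M, b.coord i v = 0 := by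
      intro v
      induction v using TensorProduct.induction_on with
      | zero => simp
      | tmul c m =>
        have hc : c ⊗ₜ[R] m = c • ((1 : ResidueField R) ⊗ₜ[R] m) := by
          rw [TensorProduct.smul_tmul', smul_eq_mul, mul_one]
        rw [hc, map_smul, h, smul_zero]
      | add a c ha hc => rw [map_add, ha, hc, add_zero]
    have h1 := hzero (b i)
    rw [Module.Basis.coord_apply, Module.Basis.repr_self, Finsupp.single_eq_same] at h1
    exact one_ne_zero h1
  obtain ⟨m₀, hm₀⟩ := hψnz
  let χ : M →ₗ[R] ResidueField R :=
    ((b.coord i).restrictScalars R).comp ((TensorProduct.mk R (ResidueField R) M) 1)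
  have hχ : Function.Surjective χ := by
    intro c
    set u : ResidueField R := b.coord i ((1 : ResidueField R) ⊗ₜ m₀) with hu
    obtain ⟨r, hr⟩ := Ideal.Quotient.mk_surjective (I := maximalIdeal R) (c * u⁻¹)
    refine ⟨r • m₀, ?_⟩
    have hsm : χ (r • m₀) = r • χ m₀ := map_smul χ r m₀
    rw [hsm]
    show r • u = c
    rw [Algebra.smul_def]
    have halg : algebraMap R (ResidueField R) r = Ideal.Quotient.mk (maximalIdeal R) r := rfl
    rw [halg, hr, mul_assoc, inv_mul_cancel₀ hm₀, mul_one]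
  haveI : Subsingleton (ResidueField R ⊗[R] J) :=
    (TensorProduct.map_surjective (g := χ) (g' := (LinearMap.id : J →ₗ[R] J)) hχ
      (fun j => ⟨j, rfl⟩)).subsingleton
  haveI hJss : Subsingleton J := (IsLocalRing.subsingleton_tensorProduct).1 this
  -- conclude
  intro a b' hab
  have hab' : x • a = x • b' := hab
  have h0 : x • (a - b') = 0 := by
    rw [smul_sub, hab', sub_self]
  have hmem : a - b' ∈ J := LinearMap.mem_ker.mpr h0
  have h1 : (⟨a - b', hmem⟩ : J) = (0 : J) := Subsingleton.elim _ _
  have hab0 : a - b' = 0 := congrArg Subtype.val h1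
  exact sub_eq_zero.mp hab0
end
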